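/- arXiv:2202.12500 — 4 statements merged into one kernel-verified Lean document; each statement's English description precedes it below -/
import Mathlib

section
/- Let C be the free 𝔽₂[U,V]-module on generators xd, yc, xc, yd with differential ∂(xd) = ∂(yc) = U·xc + V·yd, ∂(xc) = V·xd + V·yc, ∂(yd) = U·xd + U·yc. Then the differential induced by ∂ on the quotient C/(U,V)C vanishes; consequently the homology of C/(U,V)C is a 4-dimensional 𝔽₂-vector space, with basis given by the classes of xd, xc, yd, and xd + yc, which lie in bidegrees (0,0), (1,1), (−1,−1), and (0,0) respectively (for the bigrading with gr(xd) = gr(yc) = (0,0), gr(xc) = (1,1), gr(yd) = (−1,−1)). -/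
/-!
The link Floer complex `CFL_{UV}(S²×S¹, L₂)`: free over `𝔽₂[U,V]` on
`xd, yc, xc, yd` with `∂(xd) = ∂(yc) = U·xc + V·yd`, `∂(xc) = V·xd + V·yc`,
`∂(yd) = U·xd + U·yc`.  The differential induced on the quotient `C/(U,V)C`
vanishes, so the homology of `C/(U,V)C` is the 4-dimensional `𝔽₂`-vector space
`C/(U,V)C` itself, with basis the classes of `xd, xc, yd, xd + yc`, which lie
in bidegrees `(0,0), (1,1), (-1,-1), (0,0)`.
-/

open MvPolynomial

noncomputable section

abbrev F2 := ZMod 2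
abbrev R2 := MvPolynomial (Fin 2) F2

def U : R2 := X 0
def V : R2 := X 1

/-- The matrix of the differential; generators: `0 = xd`, `1 = yc`, `2 = xc`, `3 = yd`.
The `i`-th column records `∂` of the `i`-th generator. -/
def Dmat : Matrix (Fin 4) (Fin 4) R2 :=
  !![0, 0, V, U;
     0, 0, V, U;
     U, U, 0, 0;
     V, V, 0, 0]

/-- The generators `xd, yc, xc, yd`. -/
def gen (i : Fin 4) : Fin 4 → R2 := Pi.single i 1

/-- The bidegrees of the generators: `gr(xd) = (0,0)`, `gr(yc) = (0,0)`,
`gr(xc) = (1,1)`, `gr(yd) = (-1,-1)`. -/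
def grGen : Fin 4 → ℤ × ℤ := ![(0, 0), (0, 0), (1, 1), (-1, -1)]

/-- The subspace of homogeneous elements of bidegree `g`. -/
def Homog (g : ℤ × ℤ) : Submodule F2 (Fin 4 → R2) :=
  Submodule.span F2
    {v | ∃ (i : Fin 4) (a b : ℕ),
      v = (U ^ a * V ^ b) • gen i ∧
        grGen i + (a : ℤ) • ((-2 : ℤ), (-1 : ℤ)) + (b : ℤ) • ((0 : ℤ), (1 : ℤ)) = g}

/-- Reduction mod `(U, V)`, i.e. evaluation `U ↦ 0`, `V ↦ 0`. -/
def ε : R2 →ₐ[F2] F2 := aeval 0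

/-- The quotient map `C → C/(U,V)C`, identifying `C/(U,V)C` with `Fin 4 → 𝔽₂`. -/
def q : (Fin 4 → R2) → (Fin 4 → F2) := fun v i => ε (v i)

lemma epsU : ε U = 0 := by simp [ε, U]
lemma epsV : ε V = 0 := by simp [ε, V]

def Mb : Matrix (Fin 4) (Fin 4) F2 :=
  !![1,0,0,1; 0,0,0,1; 0,1,0,0; 0,0,1,0]

lemma Mb_det : IsUnit Mb.det := by
  have : Mb.det = 1 := by decide
  simp [this]

lemma homog_gen (i : Fin 4) (g : ℤ × ℤ) (h : grGen i = g) : gen i ∈ Homog g := by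
  apply Submodule.subset_span
  exact ⟨i, 0, 0, by simp, by simpa using h⟩

/-- The differential induced on `C/(U,V)C` vanishes; hence the homology of
`C/(U,V)C` is `C/(U,V)C` itself, a 4-dimensional `𝔽₂`-vector space with basis
the classes of `xd`, `xc`, `yd`, `xd + yc`, which lie in bidegrees
`(0,0)`, `(1,1)`, `(-1,-1)`, `(0,0)` respectively. -/
theorem stmt1 :
    Dmat.map ε = 0 ∧
      Module.finrank F2 (Fin 4 → F2) = 4 ∧
      (∃ B : Module.Basis (Fin 4) F2 (Fin 4 → F2),
        B 0 = q (gen 0) ∧ B 1 = q (gen 2) ∧ B 2 = q (gen 3) ∧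
          B 3 = q (gen 0 + gen 1)) ∧
      gen 0 ∈ Homog (0, 0) ∧ gen 2 ∈ Homog (1, 1) ∧ gen 3 ∈ Homog (-1, -1) ∧
      gen 0 + gen 1 ∈ Homog (0, 0) := by
  refine ⟨?_, ?_, ?_, ?_, ?_, ?_, ?_⟩
  · ext i j
    fin_cases i <;> fin_cases j <;>
      simp [Dmat, Matrix.map_apply, epsU, epsV, Matrix.vecHead, Matrix.vecTail]
  · simp
  · haveI := Mb.invertibleOfIsUnitDet Mb_det
    refine ⟨(Pi.basisFun F2 (Fin 4)).map (Matrix.toLinearEquiv' Mb this), ?_, ?_, ?_, ?_⟩ <;>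
    · ext j
      fin_cases j <;>
        simp [Matrix.toLinearEquiv', Mb, q, gen, Matrix.mulVec, ε, dotProduct,
          Fin.sum_univ_four, Pi.single_apply, unitOfInvertible]
  · exact homog_gen 0 _ rfl
  · exact homog_gen 2 _ rfl
  · exact homog_gen 3 _ rfl
  · exact Submodule.add_mem _ (homog_gen 0 _ rfl) (homog_gen 1 _ rfl)

end
end

section
/- Let (C, ∂) be a chain complex of free modules over 𝔽₂[U,V], let C^st = C ⊕ C with differential ∂^st(x, y) = (∂x + UV·y, ∂y), and let S⁺: C → C^st be the chain map x ↦ (x, 0). Let A = 𝔽₂[U, U⁻¹] regarded as an 𝔽₂[U,V]-algebra via V ↦ 0 and U ↦ U. Then the base-changed differential on C^st ⊗_{𝔽₂[U,V]} A is the direct-sum differential ∂ ⊕ ∂, the base-changed map S⁺ ⊗ id is a split injection of chain complexes over A, and hence S⁺ ⊗ id induces an injective map on homology. The same conclusions hold with the roles of U and V exchanged, i.e. for the base change to 𝔽₂[V, V⁻¹] via U ↦ 0. -/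
/-!
Locality of the algebraic free-stabilization map.  For a chain complex `(C, ∂)`
of free `𝔽₂[U,V]`-modules, let `C^st = C ⊕ C` carry `∂^st(x,y) = (∂x + UV·y, ∂y)`
and `S⁺ : C → C^st`, `x ↦ (x,0)`.  Base-changing to `A = 𝔽₂[U, U⁻¹]` (via `V ↦ 0`),
the differential `∂^st` becomes the direct-sum differential `∂ ⊕ ∂`, the map `S⁺`
becomes a split injection of chain complexes over `A`, and hence induces an
injective map on homology.  The same statements hold for `𝔽₂[V, V⁻¹]` (via `U ↦ 0`).
-/

open MvPolynomial TensorProduct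

noncomputable section

/-- The stabilized differential `∂^st(x, y) = (∂x + UV·y, ∂y)` on `C^st = C ⊕ C`. -/
def stab {C : Type*} [AddCommGroup C] [Module R2 C] (d : C →ₗ[R2] C) :
    (C × C) →ₗ[R2] (C × C) :=
  LinearMap.prod (d ∘ₗ LinearMap.fst R2 C C + (U * V) • LinearMap.snd R2 C C)
    (d ∘ₗ LinearMap.snd R2 C C)

/-- `𝔽₂[U, U⁻¹]`, as an `𝔽₂[U,V]`-algebra via `U ↦ U`, `V ↦ 0`. -/
def LPU : Type := LaurentPolynomial F2

instance : CommRing LPU := inferInstanceAs (CommRing (LaurentPolynomial F2))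
instance : Algebra F2 LPU := inferInstanceAs (Algebra F2 (LaurentPolynomial F2))
instance : Algebra R2 LPU :=
  RingHom.toAlgebra
    (aeval ![(id (LaurentPolynomial.T 1) : LPU), 0] : R2 →ₐ[F2] LPU).toRingHom

/-- `𝔽₂[V, V⁻¹]`, as an `𝔽₂[U,V]`-algebra via `U ↦ 0`, `V ↦ V`. -/
def LPV : Type := LaurentPolynomial F2

instance : CommRing LPV := inferInstanceAs (CommRing (LaurentPolynomial F2))
instance : Algebra F2 LPV := inferInstanceAs (Algebra F2 (LaurentPolynomial F2))
instance : Algebra R2 LPV :=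
  RingHom.toAlgebra
    (aeval ![0, (id (LaurentPolynomial.T 1) : LPV)] : R2 →ₐ[F2] LPV).toRingHom


lemma stab_eq {C : Type*} [AddCommGroup C] [Module R2 C] (d : C →ₗ[R2] C) :
    stab d = d.prodMap d + (U * V) • ((LinearMap.inl R2 C C) ∘ₗ LinearMap.snd R2 C C) := by
  apply LinearMap.ext
  rintro ⟨x, y⟩
  simp [stab, Prod.ext_iff]

lemma smul_baseChange_zero (A : Type) [CommRing A] [Algebra R2 A]
    (h : algebraMap R2 A (U * V) = 0)
    {C D : Type*} [AddCommGroup C] [Module R2 C] [AddCommGroup D] [Module R2 D]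
    (g : C →ₗ[R2] D) : ((U * V) • g).baseChange A = 0 := by
  ext m
  show ((U * V) • g).baseChange A ((1 : A) ⊗ₜ[R2] m) = (0 : _ →ₗ[A] _) ((1 : A) ⊗ₜ[R2] m)
  rw [LinearMap.baseChange_tmul, LinearMap.smul_apply, TensorProduct.tmul_smul,
    ← algebraMap_smul A (U * V) ((1 : A) ⊗ₜ[R2] g m), h, zero_smul, LinearMap.zero_apply]

lemma key (A : Type) [CommRing A] [Algebra R2 A]
    (h : algebraMap R2 A (U * V) = 0)
    {C : Type*} [AddCommGroup C] [Module R2 C] (d : C →ₗ[R2] C) :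
    ((stab d).baseChange A = (d.prodMap d).baseChange A ∧
      (∃ r : A ⊗[R2] (C × C) →ₗ[A] A ⊗[R2] C,
        r ∘ₗ (LinearMap.inl R2 C C).baseChange A = LinearMap.id ∧
        r ∘ₗ (stab d).baseChange A = d.baseChange A ∘ₗ r) ∧
      (∀ x : A ⊗[R2] C, d.baseChange A x = 0 →
        (LinearMap.inl R2 C C).baseChange A x ∈
          LinearMap.range ((stab d).baseChange A) →
        x ∈ LinearMap.range (d.baseChange A))) := by
  have hbc : (stab d).baseChange A = (d.prodMap d).baseChange A := by
    rw [stab_eq, LinearMap.baseChange_add, smul_baseChange_zero A h, add_zero]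
  have hfst : (LinearMap.fst R2 C C) ∘ₗ (d.prodMap d) = d ∘ₗ LinearMap.fst R2 C C := by
    apply LinearMap.ext; rintro ⟨x, y⟩; rfl
  have hinl : (LinearMap.fst R2 C C) ∘ₗ (LinearMap.inl R2 C C) = LinearMap.id := by
    apply LinearMap.ext; intro x; rfl
  refine ⟨hbc, ⟨(LinearMap.fst R2 C C).baseChange A, ?_, ?_⟩, ?_⟩
  · rw [← LinearMap.baseChange_comp, hinl, LinearMap.baseChange_id]
  · rw [hbc, ← LinearMap.baseChange_comp, hfst, LinearMap.baseChange_comp]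
  · intro x hx hmem
    obtain ⟨w, hw⟩ := hmem
    refine ⟨(LinearMap.fst R2 C C).baseChange A w, ?_⟩
    have : (LinearMap.fst R2 C C).baseChange A ((stab d).baseChange A w)
        = d.baseChange A ((LinearMap.fst R2 C C).baseChange A w) := by
      rw [hbc]
      have := congrArg (fun f => f w)
        (by rw [← LinearMap.baseChange_comp, hfst, LinearMap.baseChange_comp] :
          (LinearMap.fst R2 C C).baseChange A ∘ₗ (d.prodMap d).baseChange A
            = d.baseChange A ∘ₗ (LinearMap.fst R2 C C).baseChange A)
      exact this
    rw [← this, hw, ← LinearMap.comp_apply, ← LinearMap.baseChange_comp, hinl,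
      LinearMap.baseChange_id, LinearMap.id_apply]

lemma hU : algebraMap R2 LPU (U * V) = 0 := by
  show (aeval ![(id (LaurentPolynomial.T 1) : LPU), 0] : R2 →ₐ[F2] LPU) (U * V) = 0
  simp [U, V]

lemma hV : algebraMap R2 LPV (U * V) = 0 := by
  show (aeval ![0, (id (LaurentPolynomial.T 1) : LPV)] : R2 →ₐ[F2] LPV) (U * V) = 0
  simp [U, V]

theorem stmt3 (C : Type*) [AddCommGroup C] [Module R2 C] [Module.Free R2 C]
    (d : C →ₗ[R2] C) (hd : d ∘ₗ d = 0) :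
    -- base change to 𝔽₂[U,U⁻¹] via V ↦ 0:
    ((stab d).baseChange LPU = (d.prodMap d).baseChange LPU ∧
      (∃ r : LPU ⊗[R2] (C × C) →ₗ[LPU] LPU ⊗[R2] C,
        r ∘ₗ (LinearMap.inl R2 C C).baseChange LPU = LinearMap.id ∧
        r ∘ₗ (stab d).baseChange LPU = d.baseChange LPU ∘ₗ r) ∧
      (∀ x : LPU ⊗[R2] C, d.baseChange LPU x = 0 →
        (LinearMap.inl R2 C C).baseChange LPU x ∈
          LinearMap.range ((stab d).baseChange LPU) →
        x ∈ LinearMap.range (d.baseChange LPU))) ∧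
    -- base change to 𝔽₂[V,V⁻¹] via U ↦ 0:
    ((stab d).baseChange LPV = (d.prodMap d).baseChange LPV ∧
      (∃ r : LPV ⊗[R2] (C × C) →ₗ[LPV] LPV ⊗[R2] C,
        r ∘ₗ (LinearMap.inl R2 C C).baseChange LPV = LinearMap.id ∧
        r ∘ₗ (stab d).baseChange LPV = d.baseChange LPV ∘ₗ r) ∧
      (∀ x : LPV ⊗[R2] C, d.baseChange LPV x = 0 →
        (LinearMap.inl R2 C C).baseChange LPV x ∈
          LinearMap.range ((stab d).baseChange LPV) →
        x ∈ LinearMap.range (d.baseChange LPV))) := by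
  exact ⟨key LPU hU d, key LPV hV d⟩

end
end

section
/- Let E be the free 𝔽₂[U,V]-module on generators a, b, c, d, x with differential ∂a = U·b + V·c, ∂b = V·d, ∂c = U·d, ∂d = 0, ∂x = 0, and let Ê = E/(U,V)E, a 5-dimensional 𝔽₂-vector space with vanishing induced differential. Let Φ̂, Ψ̂: Ê → Ê be the 𝔽₂-linear maps induced by the 𝔽₂[U,V]-linear maps Φ (a ↦ b, c ↦ d, other generators to 0) and Ψ (a ↦ c, b ↦ d, other generators to 0). Then the four endomorphisms id, Φ̂, Ψ̂, id + Φ̂∘Ψ̂ of Ê are linearly independent over 𝔽₂; in particular, since the differential on Ê vanishes, they are linearly independent up to chain homotopy. -/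
/-!
The hat-flavored knot Floer complex `Ê = E/(U,V)E` of the figure-eight knot:
a 5-dimensional `𝔽₂`-vector space (generators `a, b, c, d, x`) with vanishing
induced differential, carrying the induced basepoint actions `Φ̂` (`a ↦ b`,
`c ↦ d`) and `Ψ̂` (`a ↦ c`, `b ↦ d`).  The four endomorphisms
`id, Φ̂, Ψ̂, id + Φ̂∘Ψ̂` are linearly independent over `𝔽₂`; in particular, since
the differential on `Ê` vanishes, they are linearly independent up to chain
homotopy.
-/

open MvPolynomial

noncomputable section

/-- Matrix of the differential of `E`; generators `0 = a`, `1 = b`, `2 = c`,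
`3 = d`, `4 = x`; `∂a = U·b + V·c`, `∂b = V·d`, `∂c = U·d`, `∂d = 0`, `∂x = 0`. -/
def DmatE : Matrix (Fin 5) (Fin 5) R2 :=
  !![0, 0, 0, 0, 0;
     U, 0, 0, 0, 0;
     V, 0, 0, 0, 0;
     0, V, U, 0, 0;
     0, 0, 0, 0, 0]

/-- Matrix of `Φ : E → E` (`a ↦ b`, `c ↦ d`, other generators to 0). -/
def PhimatE : Matrix (Fin 5) (Fin 5) R2 :=
  !![0, 0, 0, 0, 0;
     1, 0, 0, 0, 0;
     0, 0, 0, 0, 0;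
     0, 0, 1, 0, 0;
     0, 0, 0, 0, 0]

/-- Matrix of `Ψ : E → E` (`a ↦ c`, `b ↦ d`, other generators to 0). -/
def PsimatE : Matrix (Fin 5) (Fin 5) R2 :=
  !![0, 0, 0, 0, 0;
     0, 0, 0, 0, 0;
     1, 0, 0, 0, 0;
     0, 1, 0, 0, 0;
     0, 0, 0, 0, 0]

/-- The endomorphism `Φ̂` of `Ê = E/(U,V)E ≅ 𝔽₂⁵` induced by `Φ`. -/
def Φhat : (Fin 5 → F2) →ₗ[F2] (Fin 5 → F2) := Matrix.toLin' (PhimatE.map ⇑ε)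

/-- The endomorphism `Ψ̂` of `Ê = E/(U,V)E ≅ 𝔽₂⁵` induced by `Ψ`. -/
def Ψhat : (Fin 5 → F2) →ₗ[F2] (Fin 5 → F2) := Matrix.toLin' (PsimatE.map ⇑ε)

/-- The differential induced on `Ê` vanishes, and `id, Φ̂, Ψ̂, id + Φ̂∘Ψ̂` are
linearly independent over `𝔽₂` (hence, the differential on `Ê` being zero,
linearly independent up to chain homotopy). -/
theorem stmt8 :
    DmatE.map ⇑ε = 0 ∧
      LinearIndependent F2
        ![(LinearMap.id : (Fin 5 → F2) →ₗ[F2] (Fin 5 → F2)), Φhat, Ψhat,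
          LinearMap.id + Φhat ∘ₗ Ψhat] := by
  constructor
  · ext i j
    fin_cases i <;> fin_cases j <;>
      simp [DmatE, ε, U, V, Matrix.vecHead, Matrix.vecTail]
  · rw [Fintype.linearIndependent_iff]
    intro g hg i
    have h : (∑ i, g i • ![(LinearMap.id : (Fin 5 → F2) →ₗ[F2] (Fin 5 → F2)), Φhat, Ψhat,
        LinearMap.id + Φhat ∘ₗ Ψhat] i) (Pi.single 0 1) = 0 := by rw [hg]; rfl
    simp [Fin.sum_univ_four, Φhat, Ψhat, Matrix.toLin'_apply, Matrix.mulVec,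
      dotProduct, PhimatE, PsimatE, ε, Fin.sum_univ_five, _root_.funext_iff,
      Fin.forall_fin_succ] at h
    obtain ⟨h0, h1, h2, h3⟩ := h
    rw [h3, add_zero] at h0
    fin_cases i <;> simp_all


end
end

section
/- Let 𝒜 be the torus algebra over 𝔽₂, let P = 𝒜ι₀ be the left ideal generated by ι₀, and let ∂: P → P be right multiplication by ρ₁₂, i.e. ∂(m) = m·ρ₁₂. Then ∂ ∘ ∂ = 0, so (P, ∂) is a differential module over 𝒜; the space of left 𝒜-module endomorphisms of P is 2-dimensional over 𝔽₂, spanned by the identity and right multiplication by ρ₁₂; the differential f ↦ ∂∘f + f∘∂ on this endomorphism space vanishes; and hence the homology of the endomorphism complex of (P, ∂) is 2-dimensional over 𝔽₂, with basis the classes of the identity and of right multiplication by ρ₁₂. -/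
/-!
The type-D module of the 0-framed solid torus: the left ideal `P = 𝒜ι₀` of the
torus algebra `𝒜`, with differential `∂(m) = m·ρ₁₂` (i.e. `∂x = ρ₁₂·x` on the
generator `x = ι₀`).  Then `∂ ∘ ∂ = 0`; the space of left `𝒜`-module
endomorphisms of `P` is 2-dimensional over `𝔽₂`, spanned by the identity and
`∂` (right multiplication by `ρ₁₂`); the differential `f ↦ ∂∘f + f∘∂` on the
endomorphism space vanishes; hence the homology of the endomorphism complex of
`(P, ∂)` is 2-dimensional over `𝔽₂`, with basis the classes of the identity
and of right multiplication by `ρ₁₂`.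
-/

set_option synthInstance.maxHeartbeats 2000000
set_option maxHeartbeats 4000000

noncomputable section

abbrev Mat4 := Matrix (Fin 4) (Fin 4) F2

namespace Torus

/-! We realize the torus algebra `𝒜` over `𝔽₂` concretely as the subalgebra of
`4×4` matrices over `𝔽₂` spanned by `ι₀ = E₀₀ + E₂₂`, `ι₁ = E₁₁ + E₃₃`,
`ρ₁ = E₀₁`, `ρ₂ = E₁₂`, `ρ₃ = E₂₃`, `ρ₁₂ = E₀₂`, `ρ₂₃ = E₁₃`, `ρ₁₂₃ = E₀₃`.
These satisfy exactly the defining relations of the torus algebra: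
`ι₀, ι₁` are orthogonal idempotents with `ι₀ + ι₁ = 1`; `ρ₁ = ι₀ρ₁ι₁`,
`ρ₂ = ι₁ρ₂ι₀`, `ρ₃ = ι₀ρ₃ι₁`, `ρ₁₂ = ι₀ρ₁₂ι₀`, `ρ₂₃ = ι₁ρ₂₃ι₁`,
`ρ₁₂₃ = ι₀ρ₁₂₃ι₁`; the nonzero products of `ρ`-elements are `ρ₁ρ₂ = ρ₁₂`,
`ρ₂ρ₃ = ρ₂₃`, `ρ₁ρ₂₃ = ρ₁₂₃ = ρ₁₂ρ₃`; and all other products of two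
`ρ`-elements vanish. -/

def i0m : Mat4 := Matrix.single 0 0 1 + Matrix.single 2 2 1
def i1m : Mat4 := Matrix.single 1 1 1 + Matrix.single 3 3 1
def r1m : Mat4 := Matrix.single 0 1 1
def r2m : Mat4 := Matrix.single 1 2 1
def r3m : Mat4 := Matrix.single 2 3 1
def r12m : Mat4 := Matrix.single 0 2 1
def r23m : Mat4 := Matrix.single 1 3 1
def r123m : Mat4 := Matrix.single 0 3 1

/-- The torus algebra `𝒜` over `𝔽₂`. -/
def TA : Subalgebra F2 Mat4 :=
  Algebra.adjoin F2 {i0m, i1m, r1m, r2m, r3m, r12m, r23m, r123m}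

/-- The underlying type of the torus algebra. -/
abbrev A := ↥TA

def ι₀ : A := ⟨i0m, Algebra.subset_adjoin (by simp)⟩
def ι₁ : A := ⟨i1m, Algebra.subset_adjoin (by simp)⟩
def ρ₁ : A := ⟨r1m, Algebra.subset_adjoin (by simp)⟩
def ρ₂ : A := ⟨r2m, Algebra.subset_adjoin (by simp)⟩
def ρ₃ : A := ⟨r3m, Algebra.subset_adjoin (by simp)⟩
def ρ₁₂ : A := ⟨r12m, Algebra.subset_adjoin (by simp)⟩
def ρ₂₃ : A := ⟨r23m, Algebra.subset_adjoin (by simp)⟩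
def ρ₁₂₃ : A := ⟨r123m, Algebra.subset_adjoin (by simp)⟩

/-- The left ideal `𝒜ι₀`. -/
def J0 : Submodule A A := Submodule.span A {ι₀}

/-- The left ideal `𝒜ι₁`. -/
def J1 : Submodule A A := Submodule.span A {ι₁}

lemma mul_mem_J0 (x r : A) (h : r * ι₀ = r) : x * r ∈ J0 :=
  Submodule.mem_span_singleton.mpr ⟨x * r, by rw [smul_eq_mul, mul_assoc, h]⟩

lemma mul_mem_J1 (x r : A) (h : r * ι₁ = r) : x * r ∈ J1 :=
  Submodule.mem_span_singleton.mpr ⟨x * r, by rw [smul_eq_mul, mul_assoc, h]⟩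

/-- Right multiplication by `ρ₁₂`, as a left-`𝒜`-linear endomorphism of `𝒜`. -/
def rmul : A →ₗ[A] A where
  toFun a := a * ρ₁₂
  map_add' a b := add_mul a b ρ₁₂
  map_smul' r a := by simp [smul_eq_mul, mul_assoc]

lemma hrmul : ∀ x ∈ J0, rmul x ∈ J0 := fun x _ =>
  mul_mem_J0 x ρ₁₂ (Subtype.ext (by decide))

/-- The differential `∂ : P → P`, `m ↦ m·ρ₁₂`, on `P = 𝒜ι₀`. -/
def dP : J0 →ₗ[A] J0 := rmul.restrict hrmul

/-! ### Auxiliary lemmas -/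

lemma i0_mul_i0 : ι₀ * ι₀ = ι₀ := Subtype.ext (by decide)
lemma r12_mul_r12 : ρ₁₂ * ρ₁₂ = 0 := Subtype.ext (by decide)
lemma i0_mul_r12 : ι₀ * ρ₁₂ = ρ₁₂ := Subtype.ext (by decide)

/-- The span of the eight basis matrices, as a subalgebra described by entry
conditions: upper-triangular with `m₀₀ = m₂₂` and `m₁₁ = m₃₃`. -/
def S : Subalgebra F2 Mat4 where
  carrier := {m | m 1 0 = 0 ∧ m 2 0 = 0 ∧ m 3 0 = 0 ∧ m 2 1 = 0 ∧ m 3 1 = 0 ∧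
    m 3 2 = 0 ∧ m 0 0 = m 2 2 ∧ m 1 1 = m 3 3}
  mul_mem' := by
    rintro a b ⟨ha1, ha2, ha3, ha4, ha5, ha6, ha7, ha8⟩
      ⟨hb1, hb2, hb3, hb4, hb5, hb6, hb7, hb8⟩
    simp only [Set.mem_setOf_eq, Matrix.mul_apply, Fin.sum_univ_four,
      ha1, ha2, ha3, ha4, ha5, ha6, hb1, hb2, hb3, hb4, hb5, hb6]
    refine ⟨by ring, by ring, by ring, by ring, by ring, by ring, ?_, ?_⟩
    · rw [ha7, hb7]; ring
    · rw [ha8, hb8]; ring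
  add_mem' := by
    rintro a b ⟨ha1, ha2, ha3, ha4, ha5, ha6, ha7, ha8⟩
      ⟨hb1, hb2, hb3, hb4, hb5, hb6, hb7, hb8⟩
    simp_all [Matrix.add_apply]
  algebraMap_mem' := fun r => by
    simp [Algebra.algebraMap_eq_smul_one, Matrix.smul_apply, Matrix.one_apply]

lemma TA_le_S : TA ≤ S := by
  apply Algebra.adjoin_le
  intro m hm
  simp only [Set.mem_insert_iff, Set.mem_singleton_iff] at hm
  rcases hm with h | h | h | h | h | h | h | h <;> subst h <;>
    exact ⟨by decide, by decide, by decide, by decide, by decide, by decide, by decide, by decide⟩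

lemma key (M : Mat4) (h : M ∈ S) :
    i0m * M * i0m = M 0 0 • i0m + M 0 2 • r12m := by
  obtain ⟨h1, h2, h3, h4, h5, h6, h7, h8⟩ := h
  ext i j
  fin_cases i <;> fin_cases j <;>
    simp [Matrix.mul_apply, Fin.sum_univ_four, i0m, r12m,
      Matrix.single, Matrix.add_apply, Matrix.smul_apply,
      h1, h2, h3, h4, h5, h6, ← h7] <;> ring

/-- The generator `x = ι₀` of `P = 𝒜ι₀`. -/
def g : J0 := ⟨ι₀, Submodule.mem_span_singleton_self ι₀⟩

lemma ext_of_eq_on_g (f h : J0 →ₗ[A] J0) (H : f g = h g) : f = h := by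
  apply LinearMap.ext
  intro z
  obtain ⟨c, hc⟩ := Submodule.mem_span_singleton.mp z.2
  have hz : z = c • g := Subtype.ext (by exact hc.symm)
  rw [hz, map_smul, map_smul, H]

lemma dP_apply (z : J0) : dP z = ⟨z.val * ρ₁₂, hrmul z.val z.2⟩ := rfl

lemma dP_val (z : J0) : (dP z).val = z.val * ρ₁₂ := rfl

lemma F2_cases (u : F2) : u = 0 ∨ u = 1 := by revert u; decide

lemma classify (f : J0 →ₗ[A] J0) :
    f = 0 ∨ f = LinearMap.id ∨ f = dP ∨ f = LinearMap.id + dP := by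
  set a : A := (f g).val with ha
  obtain ⟨c, hc⟩ := Submodule.mem_span_singleton.mp (f g).2
  have hg : (ι₀ : A) • g = g := Subtype.ext (by exact i0_mul_i0)
  have hfix : a = ι₀ * a := by
    conv_lhs => rw [ha, ← hg, map_smul]
    rfl
  have hcS : (c : A).val ∈ S := TA_le_S c.2
  have hval : a.val = (c : A).val 0 0 • i0m + (c : A).val 0 2 • r12m := by
    have hac : a = c * ι₀ := by rw [ha, ← hc, smul_eq_mul]
    have habc : a = ι₀ * c * ι₀ :=
      calc a = ι₀ * a := hfix
        _ = ι₀ * (c * ι₀) := by rw [← hac]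
        _ = ι₀ * c * ι₀ := (mul_assoc _ _ _).symm
    rw [habc]
    show i0m * (c : A).val * i0m = _
    exact key _ hcS
  have haA : a = (c : A).val 0 0 • ι₀ + (c : A).val 0 2 • ρ₁₂ :=
    Subtype.ext (by exact hval)
  rcases F2_cases ((c : A).val 0 0) with h0 | h0 <;>
    rcases F2_cases ((c : A).val 0 2) with h2 | h2
  · left
    apply ext_of_eq_on_g
    apply Subtype.ext
    show a = _
    rw [haA, h0, h2]; simp
  · right; right; left
    apply ext_of_eq_on_g
    apply Subtype.ext
    show a = (dP g).val
    rw [haA, h0, h2, dP_val]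
    show _ = ι₀ * ρ₁₂
    rw [i0_mul_r12]; simp
  · right; left
    apply ext_of_eq_on_g
    apply Subtype.ext
    show a = (ι₀ : A)
    rw [haA, h0, h2]; simp
  · right; right; right
    apply ext_of_eq_on_g
    apply Subtype.ext
    show a = (((LinearMap.id + dP : J0 →ₗ[A] J0)) g).val
    rw [haA, h0, h2]
    show _ = ι₀ + ι₀ * ρ₁₂
    rw [i0_mul_r12]; simp

lemma add_self_J0 (z : J0) : z + z = 0 := by
  apply Subtype.ext
  apply Subtype.ext
  show z.val.val + z.val.val = 0
  ext i j
  simp [Matrix.add_apply]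
  exact CharTwo.add_self_eq_zero _

lemma d2 : dP ∘ₗ dP = 0 := by
  apply LinearMap.ext
  intro z
  apply Subtype.ext
  show z.val * ρ₁₂ * ρ₁₂ = 0
  rw [mul_assoc, r12_mul_r12, mul_zero]

/-- `∂ ∘ ∂ = 0`; every left `𝒜`-module endomorphism of `P = 𝒜ι₀` is one of
`0`, `id`, `∂`, `id + ∂` and `id`, `∂` are `𝔽₂`-linearly independent (so the
endomorphism space is 2-dimensional over `𝔽₂`, spanned by the identity and
right multiplication by `ρ₁₂`); and the differential `f ↦ ∂∘f + f∘∂` on the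
endomorphism space vanishes; hence the homology of the endomorphism complex is
2-dimensional over `𝔽₂`, with basis the classes of `id` and of `∂`. -/

theorem stmt13 :
    dP ∘ₗ dP = 0 ∧
      (∀ f : J0 →ₗ[A] J0, f = 0 ∨ f = LinearMap.id ∨ f = dP ∨ f = LinearMap.id + dP) ∧
      (LinearMap.id (R := A) (M := J0) ≠ 0 ∧ dP ≠ 0 ∧ LinearMap.id + dP ≠ 0) ∧
      (∀ f : J0 →ₗ[A] J0, dP ∘ₗ f + f ∘ₗ dP = 0) := by
  refine ⟨d2, classify, ⟨?_, ?_, ?_⟩, ?_⟩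
  · intro h
    exact absurd (congrArg (fun z : J0 => ((z : A) : Mat4))
      (LinearMap.congr_fun h g)) (by decide)
  · intro h
    exact absurd (congrArg (fun z : J0 => ((z : A) : Mat4))
      (LinearMap.congr_fun h g)) (by decide)
  · intro h
    exact absurd (congrArg (fun z : J0 => ((z : A) : Mat4))
      (LinearMap.congr_fun h g)) (by decide)
  · intro f
    rcases classify f with h | h | h | h <;> subst h
    · simp
    · rw [LinearMap.comp_id, LinearMap.id_comp]
      apply LinearMap.ext; intro z; exact add_self_J0 _
    · rw [d2]; simp
    · rw [LinearMap.comp_add, LinearMap.add_comp, d2, LinearMap.comp_id,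
        LinearMap.id_comp]
      apply LinearMap.ext; intro z
      simp only [LinearMap.add_apply, LinearMap.zero_apply, LinearMap.comp_apply]
      rw [add_add_add_comm]
      rw [add_self_J0, add_self_J0, add_zero]


end Torus
end
end
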